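/- Suppose the weighted directed graph 𝒢 on nodes {1,…,N} is strongly connected. Then there exists a vector θ = col(θ_1,…,θ_N) ∈ ℝ^N with ℒᵀθ = 0 (a left eigenvector of the Laplacian ℒ associated with the eigenvalue 0) such that every θ_i > 0, i.e., Θ = diag(θ_1,…,θ_N) is positive definite, and the symmetric matrix ℒ̂ = Θℒ + ℒᵀΘ is positive semidefinite. -/

import Mathlib

open Matrix

/-- The Laplacian matrix of the weighted directed graph with adjacency weights `a`:
`l_{ii} = Σ_j a_{ij}` and `l_{ij} = -a_{ij}` for `i ≠ j`. -/
noncomputable def laplacian {N : ℕ} (a : Fin N → Fin N → ℝ) : Matrix (Fin N) (Fin N) ℝ :=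
  Matrix.of fun i j => if i = j then ∑ k, a i k else -(a i j)

/-- There is an edge from node `j` to node `i` iff `a i j > 0`; the graph is strongly
connected iff every node can be reached from every node along directed edges. -/
def StronglyConnected {N : ℕ} (a : Fin N → Fin N → ℝ) : Prop :=
  ∀ i j : Fin N, Relation.ReflTransGen (fun u v => 0 < a v u) i j

lemma lap_apply {N : ℕ} (a : Fin N → Fin N → ℝ) (ha_diag : ∀ i, a i i = 0) (i j : Fin N) :
    laplacian a i j = (if i = j then ∑ k, a i k else 0) - a i j := by
  by_cases h : i = j <;> simp [laplacian, h, ha_diag]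

lemma lap_row_sum {N : ℕ} (a : Fin N → Fin N → ℝ) (ha_diag : ∀ i, a i i = 0) (i : Fin N) :
    ∑ j, laplacian a i j = 0 := by
  simp only [lap_apply a ha_diag, Finset.sum_sub_distrib]
  simp

/-- The left-kernel relation: if `ℒᵀθ = 0` then `(Σ_k a_{jk}) θ_j = Σ_i a_{ij} θ_i`. -/
lemma ker_rel {N : ℕ} (a : Fin N → Fin N → ℝ) (ha_diag : ∀ i, a i i = 0)
    {θ : Fin N → ℝ} (hθ : (laplacian a)ᵀ.mulVec θ = 0) (j : Fin N) :
    (∑ k, a j k) * θ j = ∑ i, a i j * θ i := by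
  have h := congrFun hθ j
  simp only [mulVec, dotProduct, transpose_apply, Pi.zero_apply] at h
  simp only [lap_apply a ha_diag, sub_mul, Finset.sum_sub_distrib] at h
  rw [show (∑ x : Fin N, (if x = j then ∑ k : Fin N, a x k else 0) * θ x)
      = ∑ x : Fin N, (if x = j then (∑ k : Fin N, a x k) * θ x else 0) from
      Finset.sum_congr rfl (fun x _ => by by_cases hx : x = j <;> simp [hx])] at h
  rw [Finset.sum_ite_eq' Finset.univ j (fun i => (∑ k, a i k) * θ i)] at h
  simp only [Finset.mem_univ, if_true] at h
  linarith

/-- Existence of a strictly positive left-kernel vector of the Laplacian. -/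
lemma exists_pos_ker {N : ℕ} (a : Fin N → Fin N → ℝ)
    (ha_nonneg : ∀ i j, 0 ≤ a i j) (ha_diag : ∀ i, a i i = 0)
    (hsc : StronglyConnected a) (hN : 0 < N) :
    ∃ θ : Fin N → ℝ, (∀ i, 0 < θ i) ∧ (laplacian a)ᵀ.mulVec θ = 0 := by
  haveI : NeZero N := ⟨hN.ne'⟩
  have hone : (laplacian a) *ᵥ (fun _ => (1:ℝ)) = 0 := by
    funext i
    simp [mulVec, dotProduct, lap_row_sum a ha_diag i]
  have hdet : (laplacian a)ᵀ.det = 0 := by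
    rw [Matrix.det_transpose]
    exact Matrix.exists_mulVec_eq_zero_iff.mp ⟨fun _ => 1, by
      intro h; exact one_ne_zero (congrFun h 0), hone⟩
  obtain ⟨θ₀, hθ₀ne, hθ₀⟩ := Matrix.exists_mulVec_eq_zero_iff.mpr hdet
  set θ : Fin N → ℝ := fun i => |θ₀ i| with hθdef
  have hcomp : ∀ j, ((laplacian a)ᵀ *ᵥ θ) j ≤ 0 := by
    intro j
    have h0 := ker_rel a ha_diag hθ₀ j
    have habs : (∑ k, a j k) * θ j ≤ ∑ i, a i j * θ i := by
      have : (∑ k, a j k) * θ j = |(∑ k, a j k) * θ₀ j| := by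
        rw [abs_mul, abs_of_nonneg (Finset.sum_nonneg fun k _ => ha_nonneg j k)]
      rw [this, h0]
      calc |∑ i, a i j * θ₀ i| ≤ ∑ i, |a i j * θ₀ i| := Finset.abs_sum_le_sum_abs _ _
        _ = ∑ i, a i j * θ i := by
            refine Finset.sum_congr rfl fun i _ => ?_
            rw [abs_mul, abs_of_nonneg (ha_nonneg i j)]
    have : ((laplacian a)ᵀ *ᵥ θ) j = (∑ k, a j k) * θ j - ∑ i, a i j * θ i := by
      simp only [mulVec, dotProduct, transpose_apply]
      simp only [lap_apply a ha_diag, sub_mul, Finset.sum_sub_distrib]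
      congr 1
      rw [show (∑ x : Fin N, (if x = j then ∑ k : Fin N, a x k else 0) * θ x)
          = ∑ x : Fin N, (if x = j then (∑ k : Fin N, a x k) * θ x else 0) from
          Finset.sum_congr rfl (fun x _ => by by_cases hx : x = j <;> simp [hx])]
      rw [Finset.sum_ite_eq' Finset.univ j (fun i => (∑ k, a i k) * θ i)]
      simp
    rw [this]; linarith
  have hsum : ∑ j, ((laplacian a)ᵀ *ᵥ θ) j = 0 := by
    simp only [mulVec, dotProduct, transpose_apply]
    rw [Finset.sum_comm]
    refine Finset.sum_eq_zero fun i _ => ?_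
    rw [← Finset.sum_mul, lap_row_sum a ha_diag i, zero_mul]
  have hker : (laplacian a)ᵀ *ᵥ θ = 0 := by
    funext j
    have := (Finset.sum_eq_zero_iff_of_nonpos (fun j _ => hcomp j)).mp hsum j (Finset.mem_univ j)
    simpa using this
  refine ⟨θ, ?_, hker⟩
  have hnn : ∀ i, 0 ≤ θ i := fun i => abs_nonneg _
  have hzero_prop : ∀ u v, θ u = 0 → 0 < a v u → θ v = 0 := by
    intro u v hu hav
    have h0 := ker_rel a ha_diag hker u
    rw [hu, mul_zero] at h0
    have := (Finset.sum_eq_zero_iff_of_nonneg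
      (fun i _ => mul_nonneg (ha_nonneg i u) (hnn i))).mp h0.symm v (Finset.mem_univ v)
    rcases mul_eq_zero.mp this with h | h
    · exact absurd h hav.ne'
    · exact h
  by_contra hpos
  push_neg at hpos
  obtain ⟨j, hj⟩ := hpos
  have hj0 : θ j = 0 := le_antisymm hj (hnn j)
  have hall : ∀ i, θ i = 0 := by
    intro i
    induction hsc j i with
    | refl => exact hj0
    | tail _ hedge ih => exact hzero_prop _ _ ih hedge
  exact hθ₀ne (funext fun i => abs_eq_zero.mp (hall i))

/-- The quadratic form of a symmetric Laplacian-type matrix. -/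
lemma quad_form {N : ℕ} (b : Fin N → Fin N → ℝ) (hsymm : ∀ i j, b i j = b j i)
    (M : Matrix (Fin N) (Fin N) ℝ)
    (hM : ∀ i j, M i j = (if i = j then ∑ k, b i k else 0) - b i j)
    (x : Fin N → ℝ) :
    2 * (x ⬝ᵥ M *ᵥ x) = ∑ i, ∑ j, b i j * (x i - x j)^2 := by
  have lhs : x ⬝ᵥ M *ᵥ x
      = ∑ i, (∑ k, b i k) * (x i * x i) - ∑ i, ∑ j, b i j * (x i * x j) := by
    calc x ⬝ᵥ M *ᵥ x
        = ∑ i, ∑ j, ((if i = j then (∑ k, b i k) * (x i * x j) else 0)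
            - b i j * (x i * x j)) := by
          simp only [dotProduct, mulVec, Finset.mul_sum]
          refine Finset.sum_congr rfl fun i _ => Finset.sum_congr rfl fun j _ => ?_
          rw [hM]; by_cases h : i = j <;> simp [h] <;> ring
      _ = ∑ i, ((∑ j, (if i = j then (∑ k, b i k) * (x i * x j) else 0))
            - ∑ j, b i j * (x i * x j)) := by
          refine Finset.sum_congr rfl fun i _ => ?_
          rw [Finset.sum_sub_distrib]
      _ = ∑ i, (∑ k, b i k) * (x i * x i) - ∑ i, ∑ j, b i j * (x i * x j) := by
          rw [← Finset.sum_sub_distrib]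
          refine Finset.sum_congr rfl fun i _ => ?_
          congr 1
          rw [Finset.sum_ite_eq Finset.univ i (fun j => (∑ k, b i k) * (x i * x j))]
          simp
  have h1 : ∑ i, ∑ j, b i j * (x i - x j)^2
      = ∑ i, ∑ j, b i j * (x i * x i) + ∑ i, ∑ j, b i j * (x j * x j)
        - 2 * ∑ i, ∑ j, b i j * (x i * x j) := by
    rw [Finset.mul_sum, ← Finset.sum_add_distrib, ← Finset.sum_sub_distrib]
    refine Finset.sum_congr rfl fun i _ => ?_
    rw [Finset.mul_sum, ← Finset.sum_add_distrib, ← Finset.sum_sub_distrib]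
    refine Finset.sum_congr rfl fun j _ => ?_
    ring
  have h2 : ∑ i, ∑ j, b i j * (x j * x j) = ∑ i, ∑ j, b i j * (x i * x i) := by
    rw [Finset.sum_comm]
    exact Finset.sum_congr rfl fun j _ => Finset.sum_congr rfl fun i _ => by rw [hsymm]
  have h3 : ∀ i, ∑ j, b i j * (x i * x i) = (∑ k, b i k) * (x i * x i) := fun i =>
    (Finset.sum_mul _ _ _).symm
  rw [lhs, h1, h2]
  simp only [h3]
  ring

/-- if the weighted digraph is strongly connected, there is a left
eigenvector `θ` of the Laplacian for eigenvalue `0`, with all entries positive, such that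
`Θℒ + ℒᵀΘ` is positive semidefinite. -/
theorem stmt0 {N : ℕ} (a : Fin N → Fin N → ℝ)
    (ha_nonneg : ∀ i j, 0 ≤ a i j) (ha_diag : ∀ i, a i i = 0)
    (hsc : StronglyConnected a) :
    ∃ θ : Fin N → ℝ, (∀ i, 0 < θ i) ∧
      (laplacian a)ᵀ.mulVec θ = 0 ∧
      (Matrix.diagonal θ * laplacian a + (laplacian a)ᵀ * Matrix.diagonal θ).PosSemidef := by
  rcases Nat.eq_zero_or_pos N with hN | hN
  · subst hN
    refine ⟨fun _ => 1, fun i => one_pos, funext fun i => i.elim0, .of_dotProduct_mulVec_nonneg ?_ ?_⟩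
    · ext i j; exact i.elim0
    · intro x; simp [dotProduct]
  obtain ⟨θ, hθpos, hker⟩ := exists_pos_ker a ha_nonneg ha_diag hsc hN
  set b : Fin N → Fin N → ℝ := fun i j => θ i * a i j + θ j * a j i with hbdef
  have hbsymm : ∀ i j, b i j = b j i := fun i j => by simp [hbdef]; ring
  have hbnn : ∀ i j, 0 ≤ b i j := fun i j =>
    add_nonneg (mul_nonneg (hθpos i).le (ha_nonneg i j))
      (mul_nonneg (hθpos j).le (ha_nonneg j i))
  have hSb : ∀ i, ∑ k, b i k = 2 * (θ i * ∑ k, a i k) := by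
    intro i
    have hk := ker_rel a ha_diag hker i
    calc ∑ k, b i k = (∑ k, θ i * a i k) + ∑ k, θ k * a k i := by
          rw [← Finset.sum_add_distrib]
      _ = θ i * (∑ k, a i k) + ∑ k, a k i * θ k := by
          rw [Finset.mul_sum]
          congr 1
          exact Finset.sum_congr rfl fun k _ => mul_comm _ _
      _ = 2 * (θ i * ∑ k, a i k) := by rw [← hk]; ring
  set M := Matrix.diagonal θ * laplacian a + (laplacian a)ᵀ * Matrix.diagonal θ with hMdef
  have hM : ∀ i j, M i j = (if i = j then ∑ k, b i k else 0) - b i j := by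
    intro i j
    have : M i j = θ i * laplacian a i j + laplacian a j i * θ j := by
      simp [hMdef, Matrix.add_apply, Matrix.diagonal_mul, Matrix.mul_diagonal,
        Matrix.transpose_apply]
    rw [this, lap_apply a ha_diag, lap_apply a ha_diag]
    by_cases h : i = j
    · subst h
      rw [hSb i]
      simp [hbdef, ha_diag]
      ring
    · simp [h, Ne.symm h, hbdef]
      ring
  refine ⟨θ, hθpos, hker, .of_dotProduct_mulVec_nonneg ?_ ?_⟩
  · ext i j
    simp only [conjTranspose_apply, star_trivial]
    show M j i = M i j
    rw [hM, hM]
    by_cases h : i = j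
    · subst h; rfl
    · simp [h, Ne.symm h, hbsymm i j]
  · intro x
    rw [star_trivial]
    have hq := quad_form b hbsymm M hM x
    have hnn : 0 ≤ ∑ i, ∑ j, b i j * (x i - x j)^2 :=
      Finset.sum_nonneg fun i _ => Finset.sum_nonneg fun j _ =>
        mul_nonneg (hbnn i j) (sq_nonneg _)
    linarith
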